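/- Let φ be a measure-preserving flow on a probability space (X, μ) that is ergodic, and let s ∈ ℝ. Then the product flow Φ^s on (X × (ℝ/ℤ), μ ⊗ Lebesgue) is ergodic if and only if for every nonzero integer n, the number ns is not a measurable eigenvalue of φ. -/

import Mathlib

open MeasureTheory Filter

instance : Fact ((0 : ℝ) < 1) := ⟨one_pos⟩

/-- A flow is ergodic if every measurable set that is invariant (up to null sets)
under every time-`t` map has measure `0` or `1`. -/
def FlowErgodic {X : Type*} [MeasurableSpace X] (μ : Measure X) (φ : ℝ → X → X) : Prop :=
  ∀ A : Set X, MeasurableSet A → (∀ t : ℝ, φ t ⁻¹' A =ᵐ[μ] A) → μ A = 0 ∨ μ A = 1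

/-- `κ` is a measurable eigenvalue of the flow `φ`. -/
def IsMeasEigenvalue {X : Type*} [MeasurableSpace X] (μ : Measure X) (φ : ℝ → X → X)
    (κ : ℝ) : Prop :=
  ∃ f : X → ℂ, Measurable f ∧ ¬ (f =ᵐ[μ] fun _ => (0 : ℂ)) ∧
    ∀ t : ℝ, ∀ᵐ x ∂μ,
      f (φ t x) = Complex.exp (((2 * Real.pi * κ * t : ℝ) : ℂ) * Complex.I) * f x


open AddCircle Complex


noncomputable section Aux

local notation "𝕊" => AddCircle (1 : ℝ)
local notation "haar1" => (haarAddCircle : Measure 𝕊)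

lemma aux_fourier_pt_add {n : ℤ} (x y : 𝕊) :
    fourier n (x + y) = fourier n x * fourier n y := by
  simp_rw [fourier_apply, smul_add, AddCircle.toCircle_add, Circle.coe_mul]

lemma aux_norm_fourier (n : ℤ) (x : 𝕊) : ‖fourier n x‖ = 1 := by rw [fourier_apply]; exact Circle.norm_coe _

lemma aux_integral_fourier {m : ℤ} (hm : m ≠ 0) :
    ∫ r : 𝕊, fourier m r ∂haar1 = 0 :=
  integral_eq_zero_of_add_right_eq_neg (μ := haar1)
    (fourier_add_half_inv_index hm one_pos)

lemma aux_vol_eq_haar : (volume : Measure 𝕊) = haar1 := by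
  rw [volume_eq_smul_haarAddCircle]; simp

end Aux

noncomputable section Aux2
local notation "𝕊" => AddCircle (1 : ℝ)
local notation "haar1" => (haarAddCircle : Measure 𝕊)

lemma aux_fourier_integrable {n : ℤ} {g : 𝕊 → ℂ} (hg : Integrable g haar1) :
    Integrable (fun t : 𝕊 => fourier n t • g t) haar1 := by
  have := hg.bdd_mul ((fourier n).continuous.aestronglyMeasurable)
    (ae_of_all _ fun x => le_of_eq (aux_norm_fourier n x))
  simpa [smul_eq_mul] using this

lemma aux_fourierCoeff_const (c : ℂ) {n : ℤ} (hn : n ≠ 0) :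
    fourierCoeff (fun _ : 𝕊 => c) n = 0 := by
  rw [fourierCoeff, integral_smul_const, aux_integral_fourier (by simpa using hn), zero_smul]

lemma aux_fourierCoeff_const_zero (c : ℂ) : fourierCoeff (fun _ : 𝕊 => c) 0 = c := by
  simp [fourierCoeff, fourier_zero, neg_zero]

lemma aux_ae_const_of_fourierCoeff (g : 𝕊 → ℂ) (hg : MemLp g 2 haar1)
    (h : ∀ n : ℤ, n ≠ 0 → fourierCoeff g n = 0) :
    g =ᵐ[haar1] fun _ => fourierCoeff g 0 := by
  set c := fourierCoeff g 0 with hc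
  have hgint : Integrable g haar1 := hg.integrable (by norm_num)
  set g' : 𝕊 → ℂ := fun t => g t - c with hg'def
  have hg' : MemLp g' 2 haar1 := hg.sub (memLp_const c)
  have hcoeff : ∀ n : ℤ, fourierCoeff g' n = 0 := by
    intro n
    have hsplit : fourierCoeff g' n = fourierCoeff g n - fourierCoeff (fun _ : 𝕊 => c) n := by
      rw [fourierCoeff, fourierCoeff, fourierCoeff]
      rw [show (fun t : 𝕊 => fourier (-n) t • g' t)
          = fun t : 𝕊 => fourier (-n) t • g t - fourier (-n) t • c from
        funext fun t => by simp [hg'def, smul_sub, mul_sub]]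
      exact integral_sub (aux_fourier_integrable hgint) (aux_fourier_integrable (integrable_const c))
    rcases eq_or_ne n 0 with rfl | hn
    · rw [hsplit, aux_fourierCoeff_const_zero, ← hc, sub_self]
    · rw [hsplit, h n hn, aux_fourierCoeff_const c hn, sub_self]
  set G : Lp ℂ 2 haar1 := hg'.toLp g' with hGdef
  have hGcoeff : ∀ n : ℤ, fourierCoeff (⇑G) n = 0 := by
    intro n
    have : fourierCoeff (⇑G) n = fourierCoeff g' n := by
      rw [fourierCoeff, fourierCoeff]
      have hae' : (fun t : 𝕊 => fourier (-n) t • (⇑G) t)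
          =ᵐ[haar1] fun t : 𝕊 => fourier (-n) t • g' t :=
        (hg'.coeFn_toLp).mono fun x hx => by simp only [hGdef] at hx ⊢; rw [hx]
      exact integral_congr_ae hae'
    rw [this]; exact hcoeff n
  have hrepr : fourierBasis.repr G = 0 := by
    ext n
    rw [fourierBasis_repr]
    simpa using hGcoeff n
  have hG0 : G = 0 := by
    have := fourierBasis.repr.map_eq_zero_iff.mp hrepr
    exact this
  have hae : g' =ᵐ[haar1] 0 := by
    have h1 : g' =ᵐ[haar1] ⇑G := (hg'.coeFn_toLp).symm
    have h2 : ⇑G =ᵐ[haar1] 0 := by rw [hG0]; exact Lp.coeFn_zero ℂ 2 haar1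
    exact h1.trans h2
  filter_upwards [hae] with t ht
  have : g t - c = 0 := ht
  linear_combination this

end Aux2

noncomputable section Aux3
local notation "𝕊" => AddCircle (1 : ℝ)
local notation "haar1" => (haarAddCircle : Measure 𝕊)

lemma aux_pos_measure {m : ℤ} (hm : m ≠ 0) {c : ℂ} (hc : c ≠ 0) :
    0 < haar1 {r : 𝕊 | 0 < (c * fourier m r).re} := by
  have hopen : IsOpen {r : 𝕊 | 0 < (c * fourier m r).re} := by
    have hcont : Continuous fun r : 𝕊 => (c * fourier m r).re :=
      Complex.continuous_re.comp (continuous_const.mul (fourier m).continuous)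
    exact isOpen_lt continuous_const hcont
  have hne : {r : 𝕊 | 0 < (c * fourier m r).re}.Nonempty := by
    refine ⟨((-(Complex.arg c)) / (2 * Real.pi * m) : ℝ), ?_⟩
    have hm' : (m : ℂ) ≠ 0 := Int.cast_ne_zero.mpr hm
    have hπ : (Real.pi : ℂ) ≠ 0 := Complex.ofReal_ne_zero.mpr Real.pi_ne_zero
    have hf : fourier m ((((-(Complex.arg c)) / (2 * Real.pi * m) : ℝ) : 𝕊))
        = Complex.exp ((-(Complex.arg c) : ℝ) * Complex.I) := by
      rw [fourier_coe_apply]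
      congr 1
      push_cast
      field_simp
    rw [Set.mem_setOf_eq, hf]
    have habs : c * Complex.exp ((-(Complex.arg c) : ℝ) * Complex.I)
        = ((‖c‖ : ℝ) : ℂ) := by
      calc c * Complex.exp ((-(Complex.arg c) : ℝ) * Complex.I)
          = (((‖c‖ : ℝ) : ℂ) * Complex.exp ((Complex.arg c : ℝ) * Complex.I))
              * Complex.exp ((-(Complex.arg c) : ℝ) * Complex.I) := by
            rw [Complex.norm_mul_exp_arg_mul_I]
        _ = ((‖c‖ : ℝ) : ℂ) := by
            rw [mul_assoc, ← Complex.exp_add,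
              show ((Complex.arg c : ℝ) : ℂ) * Complex.I
                  + ((-(Complex.arg c) : ℝ) : ℂ) * Complex.I = 0 by push_cast; ring,
              Complex.exp_zero, mul_one]
    rw [habs]
    simpa using norm_pos_iff.mpr hc
  exact hopen.measure_pos haar1 hne

end Aux3

noncomputable section MainAux
local notation "𝕊" => AddCircle (1 : ℝ)
local notation "haar1" => (haarAddCircle : Measure 𝕊)

lemma aux_ae_fst {X : Type*} [MeasurableSpace X] {μ : Measure X} {Y : Type*} [MeasurableSpace Y]
    {ν : Measure Y} [SFinite ν] {P : X → Prop} (hP : ∀ᵐ x ∂μ, P x) :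
    ∀ᵐ p ∂(μ.prod ν), P p.1 := by
  rw [ae_iff] at hP ⊢
  obtain ⟨N, hsub, hNm, hN0⟩ := exists_measurable_superset_of_null hP
  refine measure_mono_null (fun p hp => Set.mem_prod.mpr ⟨hsub hp, Set.mem_univ _⟩) ?_
  rw [Measure.prod_prod, hN0, zero_mul]

end MainAux

theorem stmt_2
    {X : Type*} [MeasurableSpace X] (μ : Measure X) [IsProbabilityMeasure μ]
    (φ : ℝ → X → X)
    (hφmeas : Measurable fun p : ℝ × X => φ p.1 p.2)
    (hφ0 : φ 0 = id)
    (hφadd : ∀ s t : ℝ, φ (s + t) = φ s ∘ φ t)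
    (hφpres : ∀ t : ℝ, MeasurePreserving (φ t) μ μ)
    (herg : FlowErgodic μ φ)
    (s : ℝ) :
    FlowErgodic (μ.prod (volume : Measure (AddCircle (1 : ℝ))))
        (fun t p => (φ t p.1, p.2 + ((s * t : ℝ) : AddCircle (1 : ℝ)))) ↔
      ∀ n : ℤ, n ≠ 0 → ¬ IsMeasEigenvalue μ φ ((n : ℝ) * s) := by
  classical
  have hvol : (volume : Measure (AddCircle (1 : ℝ))) = haarAddCircle := aux_vol_eq_haar
  rw [hvol]
  set ν : Measure (AddCircle (1:ℝ)) := haarAddCircle with hνdef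
  constructor
  · -- ergodic product ⇒ no eigenvalues
    intro hProd n hn hev
    obtain ⟨f, hfm, hf0, hfe⟩ := hev
    -- key vanishing lemma
    have hBmeas : ∀ g : X → ℂ, Measurable g →
        MeasurableSet {p : X × AddCircle (1:ℝ) | 0 < (g p.1 * fourier (-n) p.2).re} := by
      intro g hgm
      exact measurableSet_lt measurable_const
        (Complex.measurable_re.comp ((hgm.comp measurable_fst).mul
          ((fourier (-n)).continuous.measurable.comp measurable_snd)))
    have key : ∀ g : X → ℂ, Measurable g →
        (μ.prod ν) {p : X × AddCircle (1:ℝ) | 0 < (g p.1 * fourier (-n) p.2).re} = 0 →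
        g =ᵐ[μ] fun _ => (0 : ℂ) := by
      intro g hgm hzero
      have hBm := hBmeas g hgm
      rw [Measure.prod_apply hBm] at hzero
      have hae := (lintegral_eq_zero_iff (measurable_measure_prodMk_left hBm)).mp hzero
      filter_upwards [hae] with x hx
      by_contra hfx
      have hpos := aux_pos_measure (m := -n) (neg_ne_zero.mpr hn) (c := g x) hfx
      have hpos' : 0 < ν (Prod.mk x ⁻¹'
          {p : X × AddCircle (1:ℝ) | 0 < (g p.1 * fourier (-n) p.2).re}) := hpos
      exact absurd hx (ne_of_gt hpos')
    set A : Set (X × AddCircle (1:ℝ)) := {p | 0 < (f p.1 * fourier (-n) p.2).re} with hAdef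
    have hAmeas : MeasurableSet A := hBmeas f hfm
    have hAinv : ∀ t : ℝ,
        (fun p : X × AddCircle (1:ℝ) => (φ t p.1, p.2 + ((s * t : ℝ) : AddCircle (1:ℝ)))) ⁻¹' A
          =ᵐ[μ.prod ν] A := by
      intro t
      rw [Filter.eventuallyEq_set]
      filter_upwards [aux_ae_fst (ν := ν) (hfe t)] with p hp
      have hkey : f (φ t p.1) * fourier (-n) (p.2 + ((s * t : ℝ) : AddCircle (1:ℝ)))
          = f p.1 * fourier (-n) p.2 := by
        have hone : Complex.exp (((2 * Real.pi * ((n : ℝ) * s) * t : ℝ) : ℂ) * Complex.I) *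
            Complex.exp (2 * Real.pi * Complex.I * ((-n : ℤ) : ℂ) * ((s * t : ℝ) : ℂ) / ((1:ℝ) : ℂ)) = 1 := by
          rw [← Complex.exp_add, ← Complex.exp_zero]
          congr 1
          push_cast
          ring
        calc f (φ t p.1) * fourier (-n) (p.2 + ((s * t : ℝ) : AddCircle (1:ℝ)))
            = (Complex.exp (((2 * Real.pi * ((n : ℝ) * s) * t : ℝ) : ℂ) * Complex.I) * f p.1) *
              (fourier (-n) p.2 *
                Complex.exp (2 * Real.pi * Complex.I * ((-n : ℤ) : ℂ) * ((s * t : ℝ) : ℂ) / ((1:ℝ) : ℂ))) := by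
              rw [hp, aux_fourier_pt_add, fourier_coe_apply]
          _ = (f p.1 * fourier (-n) p.2) *
              (Complex.exp (((2 * Real.pi * ((n : ℝ) * s) * t : ℝ) : ℂ) * Complex.I) *
                Complex.exp (2 * Real.pi * Complex.I * ((-n : ℤ) : ℂ) * ((s * t : ℝ) : ℂ) / ((1:ℝ) : ℂ))) := by
              ring
          _ = f p.1 * fourier (-n) p.2 := by rw [hone, mul_one]
      constructor
      · intro hmem
        have : 0 < (f (φ t p.1) * fourier (-n) (p.2 + ((s * t : ℝ) : AddCircle (1:ℝ)))).re := hmem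
        rw [hkey] at this
        exact this
      · intro hmem
        have : 0 < (f p.1 * fourier (-n) p.2).re := hmem
        rw [← hkey] at this
        exact this
    rcases hProd A hAmeas hAinv with h0 | h1
    · exact hf0 (key f hfm h0)
    · have hcompl : (μ.prod ν) Aᶜ = 0 := by
        rw [measure_compl hAmeas (measure_ne_top _ _), measure_univ, h1, tsub_self]
      have hsub : {p : X × AddCircle (1:ℝ) | 0 < ((fun x => -(f x)) p.1 * fourier (-n) p.2).re} ⊆ Aᶜ := by
        intro p hp
        simp only [Set.mem_setOf_eq] at hp
        have heq : (fun x => -(f x)) p.1 * fourier (-n) p.2 = -(f p.1 * fourier (-n) p.2) := by ring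
        rw [heq, Complex.neg_re] at hp
        simp only [Set.mem_compl_iff, hAdef, Set.mem_setOf_eq]
        intro hcon
        linarith
      have h' := key (fun x => -(f x)) hfm.neg (measure_mono_null hsub hcompl)
      refine hf0 ?_
      filter_upwards [h'] with x hx
      simpa using neg_eq_zero.mp hx
  · -- no eigenvalues ⇒ ergodic product
    intro hyp A hA hAinv
    set G : X × AddCircle (1:ℝ) → ℂ := fun p => Set.indicator A (fun _ => (1:ℂ)) p with hGdef
    have hGmeas : Measurable G := measurable_const.indicator hA
    have hGbd : ∀ p, ‖G p‖ ≤ 1 := by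
      intro p
      by_cases h : p ∈ A <;> simp [hGdef, Set.indicator_apply, h]
    set F : ℤ → X → ℂ := fun k x => fourierCoeff (fun r => G (x, r)) k with hFdef
    have hFmeas : ∀ k, Measurable (F k) := by
      intro k
      have hH : StronglyMeasurable fun p : X × AddCircle (1:ℝ) => fourier (-k) p.2 • G p :=
        (((fourier (-k)).continuous.measurable.comp measurable_snd).smul hGmeas).stronglyMeasurable
      have := (MeasureTheory.StronglyMeasurable.integral_prod_right' (ν := ν) hH).measurable
      exact this
    have hFrel : ∀ (k : ℤ) (t : ℝ), ∀ᵐ x ∂μ,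
        F k (φ t x) =
          Complex.exp (((2 * Real.pi * (((-k : ℤ) : ℝ) * s) * t : ℝ) : ℂ) * Complex.I) * F k x := by
      intro k t
      have hGinv : ∀ᵐ p ∂(μ.prod ν),
          G (φ t p.1, p.2 + ((s * t : ℝ) : AddCircle (1:ℝ))) = G p := by
        filter_upwards [hAinv t] with p hp
        have hiff : ((φ t p.1, p.2 + ((s * t : ℝ) : AddCircle (1:ℝ))) ∈ A) = (p ∈ A) := hp
        simp only [hGdef]
        rw [Set.indicator_apply, Set.indicator_apply, hiff]
      filter_upwards [Measure.ae_ae_of_ae_prod hGinv] with x hx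
      have hstep : F k (φ t x) =
          ∫ r, fourier (-k) (r + ((s * t : ℝ) : AddCircle (1:ℝ))) •
            G (φ t x, r + ((s * t : ℝ) : AddCircle (1:ℝ))) ∂ν := by
        simp only [hFdef, fourierCoeff]
        exact (integral_add_right_eq_self
          (μ := ν) (fun r => fourier (-k) r • G (φ t x, r)) ((s * t : ℝ) : AddCircle (1:ℝ))).symm
      have hcong : (∫ r, fourier (-k) (r + ((s * t : ℝ) : AddCircle (1:ℝ))) •
            G (φ t x, r + ((s * t : ℝ) : AddCircle (1:ℝ))) ∂ν)
          = ∫ r, fourier (-k) (((s * t : ℝ) : AddCircle (1:ℝ))) * (fourier (-k) r • G (x, r)) ∂ν := by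
        refine integral_congr_ae ?_
        filter_upwards [hx] with r hr
        rw [aux_fourier_pt_add, hr]
        simp only [smul_eq_mul]
        ring
      rw [hstep, hcong, integral_const_mul]
      have : (fourier (-k) (((s * t : ℝ) : AddCircle (1:ℝ))) : ℂ)
          = Complex.exp (((2 * Real.pi * (((-k : ℤ) : ℝ) * s) * t : ℝ) : ℂ) * Complex.I) := by
        rw [fourier_coe_apply]
        congr 1
        push_cast
        ring
      rw [this]
      rfl
    have hFzero : ∀ k : ℤ, k ≠ 0 → F k =ᵐ[μ] fun _ => (0 : ℂ) := by
      intro k hk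
      by_contra hne
      exact hyp (-k) (neg_ne_zero.mpr hk) ⟨F k, hFmeas k, hne, fun t => hFrel k t⟩
    -- the set B
    set B : Set X := {x | 1/2 < (F 0 x).re} with hBdef
    have hBmeas : MeasurableSet B :=
      measurableSet_lt measurable_const (Complex.measurable_re.comp (hFmeas 0))
    have hBinv : ∀ t : ℝ, φ t ⁻¹' B =ᵐ[μ] B := by
      intro t
      rw [Filter.eventuallyEq_set]
      filter_upwards [hFrel 0 t] with x hx
      have hx' : F 0 (φ t x) = F 0 x := by
        simpa using hx
      simp only [Set.mem_preimage, hBdef, Set.mem_setOf_eq, hx']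
    have hergB := herg B hBmeas hBinv
    -- fiberwise analysis
    have hallk : ∀ᵐ x ∂μ, ∀ k : ℤ, k ≠ 0 → F k x = 0 := by
      rw [ae_all_iff]
      intro k
      by_cases hk : k = 0
      · filter_upwards with x h0; exact absurd hk h0
      · filter_upwards [hFzero k hk] with x hx _; exact hx
    have hfiber : ∀ᵐ x ∂μ, ν (Prod.mk x ⁻¹' A) = Set.indicator B (fun _ => (1 : ENNReal)) x := by
      filter_upwards [hallk] with x hx
      set g : AddCircle (1:ℝ) → ℂ := fun r => G (x, r) with hgdef
      have hgmem : MemLp g 2 ν := by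
        refine MemLp.of_bound ((hGmeas.comp measurable_prodMk_left).aestronglyMeasurable) 1 ?_
        exact Filter.Eventually.of_forall fun r => hGbd (x, r)
      have hcoeffs : ∀ k : ℤ, k ≠ 0 → fourierCoeff g k = 0 := fun k hk => hx k hk
      have hconst := aux_ae_const_of_fourierCoeff g hgmem hcoeffs
      have hF0 : fourierCoeff g 0 = F 0 x := rfl
      rw [hF0] at hconst
      -- existence of a point where g equals the constant
      have hne : (MeasureTheory.ae ν).NeBot :=
        MeasureTheory.ae_neBot.mpr (IsProbabilityMeasure.ne_zero ν)
      obtain ⟨r₀, hr₀'⟩ := hconst.exists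
      have hr₀ : g r₀ = F 0 x := hr₀'
      have hval : F 0 x = 0 ∨ F 0 x = 1 := by
        by_cases h : (x, r₀) ∈ A
        · right; rw [← hr₀]; simp [hgdef, hGdef, Set.indicator_apply, h]
        · left; rw [← hr₀]; simp [hgdef, hGdef, Set.indicator_apply, h]
      rcases hval with h0 | h1
      · have hnullA : ν (Prod.mk x ⁻¹' A) = 0 := by
          refine measure_mono_null (fun r hr => ?_) (ae_iff.mp hconst)
          simp only [Set.mem_setOf_eq, h0]
          rw [show g r = 1 from by simp [hgdef, hGdef, Set.indicator_apply, show (x, r) ∈ A from hr]]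
          norm_num
        rw [hnullA]
        have hxB : x ∉ B := by
          simp only [hBdef, Set.mem_setOf_eq, h0]
          norm_num
        simp [Set.indicator_apply, hxB]
      · have hnullAc : ν (Prod.mk x ⁻¹' A)ᶜ = 0 := by
          refine measure_mono_null (fun r hr => ?_) (ae_iff.mp hconst)
          simp only [Set.mem_setOf_eq, h1]
          rw [show g r = 0 from by simp [hgdef, hGdef, Set.indicator_apply, show (x, r) ∉ A from hr]]
          norm_num
        have hAx : MeasurableSet (Prod.mk x ⁻¹' A) := measurable_prodMk_left hA
        have : ν (Prod.mk x ⁻¹' A) = 1 := (prob_compl_eq_zero_iff hAx).mp hnullAc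
        rw [this]
        have hxB : x ∈ B := by
          simp only [hBdef, Set.mem_setOf_eq, h1]
          norm_num
        simp [Set.indicator_apply, hxB]
    have hAmeasure : (μ.prod ν) A = μ B := by
      rw [Measure.prod_apply hA, lintegral_congr_ae hfiber, lintegral_indicator hBmeas]
      simp
    rcases hergB with h0 | h1
    · left; rw [hAmeasure, h0]
    · right; rw [hAmeasure, h1]
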